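/- Let n ≥ 1 and let g = diag(1,−1,…,−1) be the (n+1)×(n+1) Minkowski metric matrix. Consider the Poincaré Lie algebra iso(1,n) realized as the Lie algebra of (n+2)×(n+2) real matrices of block form [[A, b],[0, 0]] with A ∈ so(1,n) = { X ∈ M_{n+1}(ℝ) : Xᵀg + gX = 0 } and b ∈ ℝ^{n+1}, with bracket the matrix commutator. For every ν with 1 ≤ ν ≤ n, the embedded boost generator [[m_{0ν}, 0],[0,0]] with m_{0ν} = E(0,ν) + E(ν,0) is an essential element of iso(1,n). -/

import Mathlib

open Matrix

attribute [local instance 100] LieRing.ofAssociativeRing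

/-- The linear span of all brackets `⁅a, b⁆` with `a ∈ A`, `b ∈ B`. -/
def bracketSpan {L : Type*} [LieRing L] [LieAlgebra ℝ L] (A B : Submodule ℝ L) :
    Submodule ℝ L :=
  Submodule.span ℝ {x | ∃ a ∈ A, ∃ b ∈ B, x = ⁅a, b⁆}

/-- `m` is essential: `ad m` is diagonalizable over `ℝ` and
`ℝ·m + [m,g] + [[m,g],[m,g]] = g`. -/
def Essential {L : Type*} [LieRing L] [LieAlgebra ℝ L] (m : L) : Prop :=
  (⨆ c : ℝ, (LieAlgebra.ad ℝ L m).eigenspace c) = ⊤ ∧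
    Submodule.span ℝ {m} ⊔ LinearMap.range (LieAlgebra.ad ℝ L m) ⊔
      bracketSpan (LinearMap.range (LieAlgebra.ad ℝ L m))
        (LinearMap.range (LieAlgebra.ad ℝ L m)) = ⊤

/-- The real Lie algebra of matrices `X` with `Xᵀ * J + J * X = 0`. -/
def lieSO {ι : Type*} [Fintype ι] [DecidableEq ι] (J : Matrix ι ι ℝ) :
    LieSubalgebra ℝ (Matrix ι ι ℝ) where
  carrier := {X | Xᵀ * J + J * X = 0}
  zero_mem' := by simp
  add_mem' := by
    intro a b ha hb
    simp only [Set.mem_setOf_eq] at ha hb ⊢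
    rw [transpose_add, add_mul, mul_add, add_add_add_comm, ha, hb, add_zero]
  smul_mem' := by
    intro r X hX
    simp only [Set.mem_setOf_eq] at hX ⊢
    rw [transpose_smul, smul_mul, Matrix.mul_smul, ← smul_add, hX, smul_zero]
  lie_mem' := by
    intro X Y hX hY
    simp only [Set.mem_setOf_eq] at hX hY ⊢
    have hX' : Xᵀ * J = -(J * X) := eq_neg_of_add_eq_zero_left hX
    have hY' : Yᵀ * J = -(J * Y) := eq_neg_of_add_eq_zero_left hY
    have h1 : Yᵀ * Xᵀ * J = J * (Y * X) := by
      rw [mul_assoc, hX', mul_neg, ← mul_assoc, hY', neg_mul, neg_neg, mul_assoc]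
    have h2 : Xᵀ * Yᵀ * J = J * (X * Y) := by
      rw [mul_assoc, hY', mul_neg, ← mul_assoc, hX', neg_mul, neg_neg, mul_assoc]
    rw [Ring.lie_def, transpose_sub, transpose_mul, transpose_mul, sub_mul, h1, h2,
      mul_sub]
    abel

/-- The symmetric "boost" matrix `E(a,b) + E(b,a)` lies in `lieSO (diagonal d)`
whenever `d a = 1` and `d b = -1`. -/
lemma boost_mem_lieSO {ι : Type*} [Fintype ι] [DecidableEq ι] (d : ι → ℝ) (a b : ι)
    (ha : d a = 1) (hb : d b = -1) :
    (single a b (1 : ℝ) + single b a 1) ∈ lieSO (diagonal d) := by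
  have hab : a ≠ b := by intro h; rw [h, hb] at ha; norm_num at ha
  show _ᵀ * _ + _ * _ = 0
  ext i j
  simp only [transpose_add, add_mul, mul_add, Matrix.add_apply, mul_diagonal,
    diagonal_mul, transpose_apply, Matrix.zero_apply, single, of_apply]
  split_ifs <;> simp_all

/-- The Minkowski metric diagonal `(1,-1,…,-1)` on indices `0,…,n`. -/
def minkDiag (n : ℕ) : Fin (n + 1) → ℝ := fun i => if i = 0 then 1 else -1

/-- The Poincaré Lie algebra `iso(1,n)`, realized as the `(n+2)×(n+2)` real matrices of
block form `[[A, b], [0, 0]]` with `A ∈ so(1,n)` and `b ∈ ℝ^{n+1}`. -/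
def poincareLie (n : ℕ) :
    LieSubalgebra ℝ (Matrix (Fin (n + 1) ⊕ Unit) (Fin (n + 1) ⊕ Unit) ℝ) where
  carrier := {X | ∃ A ∈ lieSO (Matrix.diagonal (minkDiag n)),
    ∃ b : Matrix (Fin (n + 1)) Unit ℝ, X = fromBlocks A b 0 0}
  zero_mem' := ⟨0, (lieSO _).zero_mem, 0, by rw [fromBlocks_zero]⟩
  add_mem' := by
    rintro x y ⟨A₁, hA₁, b₁, rfl⟩ ⟨A₂, hA₂, b₂, rfl⟩
    exact ⟨A₁ + A₂, (lieSO _).add_mem hA₁ hA₂, b₁ + b₂, by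
      rw [fromBlocks_add]; simp⟩
  smul_mem' := by
    rintro r x ⟨A, hA, b, rfl⟩
    exact ⟨r • A, (lieSO _).smul_mem r hA, r • b, by rw [fromBlocks_smul]; simp⟩
  lie_mem' := by
    rintro x y ⟨A₁, hA₁, b₁, rfl⟩ ⟨A₂, hA₂, b₂, rfl⟩
    refine ⟨⁅A₁, A₂⁆, (lieSO _).lie_mem hA₁ hA₂, A₁ * b₂ - A₂ * b₁, ?_⟩
    rw [Ring.lie_def, Ring.lie_def, fromBlocks_multiply, fromBlocks_multiply,
      sub_eq_add_neg, fromBlocks_neg, fromBlocks_add]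
    simp [sub_eq_add_neg]


namespace PoincareAux

open Matrix

variable {n : ℕ} {m : Type*} [Fintype m] [DecidableEq m]

set_option linter.unusedSectionVars false

lemma stdMul_apply (a b : Fin (n+1)) (B : Matrix (Fin (n+1)) m ℝ) (i : Fin (n+1)) (j : m) :
    (single a b (1:ℝ) * B) i j = if i = a then B b j else 0 := by
  simp [mul_apply, single, of_apply, ite_and, Finset.sum_ite_eq, eq_comm]

lemma mulStd_apply (a b : Fin (n+1)) (B : Matrix m (Fin (n+1)) ℝ) (i : m) (j : Fin (n+1)) :
    (B * single a b (1:ℝ)) i j = if j = b then B i a else 0 := by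
  simp [mul_apply, single, of_apply, ite_and, Finset.sum_ite_eq, eq_comm]

/-- boost matrix -/
def bm (ν : Fin (n+1)) : Matrix (Fin (n+1)) (Fin (n+1)) ℝ :=
  single 0 ν 1 + single ν 0 1

/-- rotation matrix -/
def rot (l μ : Fin (n+1)) : Matrix (Fin (n+1)) (Fin (n+1)) ℝ :=
  single l μ 1 - single μ l 1

lemma bm_mul_apply (ν : Fin (n+1)) (B : Matrix (Fin (n+1)) m ℝ) (i : Fin (n+1)) (j : m) :
    (bm ν * B) i j = (if i = 0 then B ν j else 0) + (if i = ν then B 0 j else 0) := by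
  rw [bm, Matrix.add_mul, Matrix.add_apply, stdMul_apply, stdMul_apply]

lemma mul_bm_apply (ν : Fin (n+1)) (B : Matrix m (Fin (n+1)) ℝ) (i : m) (j : Fin (n+1)) :
    (B * bm ν) i j = (if j = ν then B i 0 else 0) + (if j = 0 then B i ν else 0) := by
  rw [bm, Matrix.mul_add, Matrix.add_apply, mulStd_apply, mulStd_apply]

lemma rot_mul_apply (l μ : Fin (n+1)) (B : Matrix (Fin (n+1)) m ℝ) (i : Fin (n+1)) (j : m) :
    (rot l μ * B) i j = (if i = l then B μ j else 0) - (if i = μ then B l j else 0) := by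
  rw [rot, Matrix.sub_mul, Matrix.sub_apply, stdMul_apply, stdMul_apply]

lemma mul_rot_apply (l μ : Fin (n+1)) (B : Matrix m (Fin (n+1)) ℝ) (i : m) (j : Fin (n+1)) :
    (B * rot l μ) i j = (if j = μ then B i l else 0) - (if j = l then B i μ else 0) := by
  rw [rot, Matrix.mul_sub, Matrix.sub_apply, mulStd_apply, mulStd_apply]

lemma bm_apply (ν i j : Fin (n+1)) :
    bm ν i j = (if i = 0 ∧ j = ν then (1:ℝ) else 0) + (if i = ν ∧ j = 0 then 1 else 0) := by
  simp only [bm, Matrix.add_apply, single, of_apply]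
  congr 1 <;> [skip; skip] <;> split_ifs <;> simp_all <;> tauto

section SO
variable {A : Matrix (Fin (n+1)) (Fin (n+1)) ℝ}
  (hA : Aᵀ * diagonal (minkDiag n) + diagonal (minkDiag n) * A = 0)

include hA

lemma so_entry (i j : Fin (n+1)) :
    A j i * minkDiag n j + minkDiag n i * A i j = 0 := by
  have := congrFun (congrFun hA i) j
  simpa [mul_diagonal, diagonal_mul, transpose_apply] using this

lemma so_diag (i : Fin (n+1)) : A i i = 0 := by
  have := so_entry hA i i
  rcases eq_or_ne i 0 with h | h
  · subst h; simp [minkDiag] at this; linarith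
  · simp [minkDiag, h] at this; linarith

lemma so_sym {j : Fin (n+1)} (hj : j ≠ 0) : A j 0 = A 0 j := by
  have := so_entry hA 0 j
  simp [minkDiag, hj] at this
  linarith

lemma so_skew {i j : Fin (n+1)} (hi : i ≠ 0) (hj : j ≠ 0) : A j i = -A i j := by
  have := so_entry hA i j
  simp [minkDiag, hi, hj] at this
  linarith

end SO

section Cube
variable {ν : Fin (n+1)} (hν : ν ≠ 0)
  {A : Matrix (Fin (n+1)) (Fin (n+1)) ℝ}
  (hA : Aᵀ * diagonal (minkDiag n) + diagonal (minkDiag n) * A = 0)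

include hν hA in
lemma cube_mat : ⁅bm ν, ⁅bm ν, ⁅bm ν, A⁆⁆⁆ = ⁅bm ν, A⁆ := by
  have h00 : A 0 0 = 0 := so_diag hA 0
  have hνν : A ν ν = 0 := so_diag hA ν
  have hν0 : A ν 0 = A 0 ν := so_sym hA hν
  have hν' : (0 : Fin (n+1)) ≠ ν := Ne.symm hν
  ext i j
  simp only [Ring.lie_def, Matrix.sub_apply, bm_mul_apply, mul_bm_apply]
  split_ifs <;> subst_vars <;> simp_all <;> linarith

include hν in
lemma cube_vec (b : Matrix (Fin (n+1)) Unit ℝ) : bm ν * (bm ν * (bm ν * b)) = bm ν * b := by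
  have hν' : (0 : Fin (n+1)) ≠ ν := Ne.symm hν
  ext i j
  simp only [bm_mul_apply]
  split_ifs <;> subst_vars <;> simp_all

end Cube

section Rel
variable {ν : Fin (n+1)} (hν : ν ≠ 0)

lemma rot_mem_so {l μ : Fin (n+1)} (hl : l ≠ 0) (hμ : μ ≠ 0) :
    (rot l μ)ᵀ * diagonal (minkDiag n) + diagonal (minkDiag n) * rot l μ = 0 := by
  ext i j
  simp only [Matrix.add_apply, mul_diagonal, diagonal_mul, transpose_apply, rot,
    Matrix.sub_apply, single, of_apply, Matrix.zero_apply, ite_and]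
  split_ifs <;> subst_vars <;> simp [minkDiag, hl, hμ] <;> first | rfl | ring | simp_all

include hν in
lemma brk_bm_bm {μ : Fin (n+1)} (hμ : μ ≠ 0) : ⁅bm ν, bm μ⁆ = rot ν μ := by
  have hν' : (0 : Fin (n+1)) ≠ ν := Ne.symm hν
  have hμ' : (0 : Fin (n+1)) ≠ μ := Ne.symm hμ
  ext i j
  simp only [Ring.lie_def, Matrix.sub_apply, bm_mul_apply, mul_bm_apply]
  simp only [rot, bm, Matrix.sub_apply, Matrix.add_apply, single, of_apply, ite_and]
  split_ifs <;> subst_vars <;> grind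

include hν in
lemma bm_mul_e0 : bm ν * single (0 : Fin (n+1)) () (1:ℝ) = single ν () 1 := by
  have hν' : (0 : Fin (n+1)) ≠ ν := Ne.symm hν
  ext i j
  simp only [bm_mul_apply, single, of_apply, ite_and]
  split_ifs <;> subst_vars <;> simp_all

include hν in
set_option maxHeartbeats 2000000 in
lemma brk_rot_rot {l μ : Fin (n+1)} (hl : l ≠ 0) (hlν : l ≠ ν) (hμ : μ ≠ 0) (hμν : μ ≠ ν) :
    ⁅rot ν μ, rot ν l⁆ = rot l μ := by
  ext i j
  simp only [Ring.lie_def, Matrix.sub_apply, rot_mul_apply, mul_rot_apply]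
  simp only [rot, Matrix.sub_apply, single, of_apply, ite_and]
  split_ifs <;> subst_vars <;> simp_all

lemma rot_mul_eν {μ : Fin (n+1)} (hμν : μ ≠ ν) :
    rot ν μ * single ν () (1:ℝ) = -single μ () 1 := by
  ext i j
  simp only [rot_mul_apply, single, of_apply, Matrix.neg_apply, ite_and]
  split_ifs <;> subst_vars <;> simp_all

end Rel

section Sum

lemma sum_rot_apply (c : Fin (n+1) → Fin (n+1) → ℝ) (i j : Fin (n+1)) :
    (∑ l, ∑ μ, c l μ • rot l μ) i j = c i j - c j i := by
  simp only [Matrix.sum_apply, Matrix.smul_apply, rot, Matrix.sub_apply, single,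
    of_apply, ite_and, smul_eq_mul, mul_sub, mul_ite, mul_one, mul_zero]
  simp only [Finset.sum_sub_distrib]
  congr 1
  · rw [Finset.sum_eq_single i (fun l _ hl => by simp [hl]) (by simp)]
    rw [Finset.sum_eq_single j (fun l _ hl => by simp [hl]) (by simp)]
    simp
  · rw [Finset.sum_eq_single j (fun l _ hl => by simp [hl]) (by simp)]
    rw [Finset.sum_eq_single i (fun l _ hl => by simp [hl]) (by simp)]
    simp

lemma sum_T_apply (cb : Fin (n+1) → ℝ) (i : Fin (n+1)) (u : Unit) :
    (∑ μ, cb μ • single μ () (1:ℝ)) i u = cb i := by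
  simp only [Matrix.sum_apply, Matrix.smul_apply, single, of_apply, ite_and,
    smul_eq_mul, mul_ite, mul_one, mul_zero]
  rw [Finset.sum_eq_single i (fun l _ hl => by simp [hl]) (by simp)]
  simp

end Sum

section Decomp
variable {ν : Fin (n+1)} (hν : ν ≠ 0)
  {A : Matrix (Fin (n+1)) (Fin (n+1)) ℝ}
  (hA : Aᵀ * diagonal (minkDiag n) + diagonal (minkDiag n) * A = 0)

include hν hA in
lemma A0_decomp :
    A - ⁅bm ν, ⁅bm ν, A⁆⁆ = (A 0 ν) • bm ν +
      ∑ l, ∑ μ, (if l = 0 ∨ l = ν ∨ μ = 0 ∨ μ = ν then 0 else A l μ / 2) • rot l μ := by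
  have h00 := so_diag hA 0
  have hνν := so_diag hA ν
  have hν0 := so_sym hA hν
  ext i j
  rw [Matrix.add_apply, sum_rot_apply]
  simp only [Matrix.sub_apply, Matrix.smul_apply, smul_eq_mul,
    Ring.lie_def, bm_mul_apply, mul_bm_apply, bm_apply]
  rcases eq_or_ne i 0 with hi0 | hi0 <;> rcases eq_or_ne j 0 with hj0 | hj0 <;>
    rcases eq_or_ne i ν with hiν | hiν <;> rcases eq_or_ne j ν with hjν | hjν <;>
    subst_vars <;>
    simp_all [hν, Ne.symm hν] <;>
    try linarith [so_skew hA hi0 hj0]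

include hν in
lemma b0_decomp (b : Matrix (Fin (n+1)) Unit ℝ) :
    b - bm ν * (bm ν * b) =
      ∑ μ, (if μ = 0 ∨ μ = ν then 0 else b μ ()) • single μ () 1 := by
  ext i u
  rw [sum_T_apply]
  simp only [Matrix.sub_apply, bm_mul_apply]
  rcases eq_or_ne i 0 with hi0 | hi0 <;> rcases eq_or_ne i ν with hiν | hiν <;>
    subst_vars <;> simp_all [Ne.symm hν]

end Decomp

section Blocks

lemma brkB (a a' : Matrix (Fin (n+1)) (Fin (n+1)) ℝ) (b b' : Matrix (Fin (n+1)) Unit ℝ) :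
    ⁅fromBlocks a b (0 : Matrix Unit (Fin (n+1)) ℝ) (0 : Matrix Unit Unit ℝ),
        fromBlocks a' b' (0 : Matrix Unit (Fin (n+1)) ℝ) (0 : Matrix Unit Unit ℝ)⁆ =
      fromBlocks ⁅a, a'⁆ (a * b' - a' * b) 0 0 := by
  simp only [Ring.lie_def, fromBlocks_multiply, Matrix.mul_zero, Matrix.zero_mul,
    add_zero, zero_add]
  ext (i | i) (j | j) <;>
    simp [fromBlocks, Matrix.sub_apply, Matrix.zero_apply, Sum.elim_inl, Sum.elim_inr]

lemma fromBlocks_sub' (a a' : Matrix (Fin (n+1)) (Fin (n+1)) ℝ)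
    (b b' : Matrix (Fin (n+1)) Unit ℝ) :
    fromBlocks a b (0 : Matrix Unit (Fin (n+1)) ℝ) (0 : Matrix Unit Unit ℝ)
      - fromBlocks a' b' 0 0 = fromBlocks (a - a') (b - b') 0 0 := by
  ext (i | i) (j | j) <;> simp [fromBlocks]

lemma sum_fromBlocks {ι : Type*} (s : Finset ι)
    (f : ι → Matrix (Fin (n+1)) (Fin (n+1)) ℝ) (g : ι → Matrix (Fin (n+1)) Unit ℝ) :
    ∑ i ∈ s, fromBlocks (f i) (g i) (0 : Matrix Unit (Fin (n+1)) ℝ) (0 : Matrix Unit Unit ℝ) =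
      fromBlocks (∑ i ∈ s, f i) (∑ i ∈ s, g i) 0 0 := by
  ext (i | i) (j | j) <;>
    simp [Matrix.sum_apply, fromBlocks, Sum.elim_inl, Sum.elim_inr]

end Blocks

section Poinc

variable {ν : Fin (n+1)} (hν : ν ≠ 0)

lemma boost_mem_P {μ : Fin (n+1)} (hμ : μ ≠ 0) :
    fromBlocks (bm μ) 0 0 0 ∈ poincareLie n :=
  ⟨bm μ, boost_mem_lieSO (minkDiag n) 0 μ (by simp [minkDiag]) (by simp [minkDiag, hμ]),
    0, rfl⟩

lemma rot_mem_P {l μ : Fin (n+1)} (hl : l ≠ 0) (hμ : μ ≠ 0) :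
    fromBlocks (rot l μ) 0 0 0 ∈ poincareLie n :=
  ⟨rot l μ, rot_mem_so hl hμ, 0, rfl⟩

lemma T_mem_P (μ : Fin (n+1)) :
    fromBlocks 0 (single μ () (1:ℝ)) 0 0 ∈ poincareLie n :=
  ⟨0, (lieSO _).zero_mem, single μ () 1, rfl⟩

end Poinc

end PoincareAux

open PoincareAux


namespace PoincareAux

variable {n : ℕ}

/-- embedded boost -/
def MB (ν : Fin (n+1)) : Matrix (Fin (n+1) ⊕ Unit) (Fin (n+1) ⊕ Unit) ℝ :=
  fromBlocks (bm ν) 0 0 0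

/-- embedded rotation -/
def MR (l μ : Fin (n+1)) : Matrix (Fin (n+1) ⊕ Unit) (Fin (n+1) ⊕ Unit) ℝ :=
  fromBlocks (rot l μ) 0 0 0

/-- embedded translation -/
def MT (μ : Fin (n+1)) : Matrix (Fin (n+1) ⊕ Unit) (Fin (n+1) ⊕ Unit) ℝ :=
  fromBlocks 0 (single μ () 1) 0 0

lemma MB_mem {μ : Fin (n+1)} (hμ : μ ≠ 0) : MB μ ∈ poincareLie n := boost_mem_P hμ

lemma MR_mem {l μ : Fin (n+1)} (hl : l ≠ 0) (hμ : μ ≠ 0) : MR l μ ∈ poincareLie n :=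
  rot_mem_P hl hμ

lemma MT_mem (μ : Fin (n+1)) : MT μ ∈ poincareLie n := T_mem_P μ

lemma coe_smulP (r : ℝ) (x : poincareLie n) :
    ((r • x : poincareLie n) : Matrix (Fin (n+1) ⊕ Unit) (Fin (n+1) ⊕ Unit) ℝ)
      = r • (x : Matrix (Fin (n+1) ⊕ Unit) (Fin (n+1) ⊕ Unit) ℝ) := rfl

set_option maxHeartbeats 1000000 in
lemma essential_of {ν : Fin (n+1)} (hν : ν ≠ 0) (Mel : poincareLie n)
    (hM : (Mel : Matrix (Fin (n+1) ⊕ Unit) (Fin (n+1) ⊕ Unit) ℝ) = MB ν) :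
    Essential Mel := by
  classical
  set f := LieAlgebra.ad ℝ (poincareLie n) Mel with hf
  have hfval : ∀ X : poincareLie n,
      ((f X : poincareLie n) : Matrix (Fin (n+1) ⊕ Unit) (Fin (n+1) ⊕ Unit) ℝ)
      = ⁅MB ν, ((X : poincareLie n) : Matrix (Fin (n+1) ⊕ Unit) (Fin (n+1) ⊕ Unit) ℝ)⁆ := by
    intro X
    rw [hf, LieAlgebra.ad_apply, LieSubalgebra.coe_bracket, hM]
  have hcube : ∀ X : poincareLie n, f (f (f X)) = f X := by
    intro X
    obtain ⟨A, hA, b, hX⟩ := X.2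
    have hA' : Aᵀ * diagonal (minkDiag n) + diagonal (minkDiag n) * A = 0 := hA
    apply Subtype.ext
    simp only [hfval]
    rw [hX, MB]
    simp only [brkB, Matrix.mul_zero, sub_zero]
    rw [cube_mat hν hA', cube_vec hν]
  constructor
  · rw [eq_top_iff]
    rintro X -
    have h0 : X - f (f X) ∈ Module.End.eigenspace f 0 := by
      rw [Module.End.mem_eigenspace_iff]
      simp [map_sub, hcube X]
    have h1 : (2⁻¹ : ℝ) • (f (f X) + f X) ∈ Module.End.eigenspace f 1 := by
      rw [Module.End.mem_eigenspace_iff, LinearMap.map_smul, LinearMap.map_add, hcube X, one_smul, add_comm (f X) (f (f X))]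
    have h2 : (2⁻¹ : ℝ) • (f (f X) - f X) ∈ Module.End.eigenspace f (-1) := by
      rw [Module.End.mem_eigenspace_iff, LinearMap.map_smul, LinearMap.map_sub, hcube X]
      module
    have hdecomp : X = (X - f (f X)) + (2⁻¹ : ℝ) • (f (f X) + f X)
        + (2⁻¹ : ℝ) • (f (f X) - f X) := by module
    rw [hdecomp]
    exact add_mem (add_mem (Submodule.mem_iSup_of_mem 0 h0)
      (Submodule.mem_iSup_of_mem 1 h1)) (Submodule.mem_iSup_of_mem (-1) h2)
  · rw [eq_top_iff]
    rintro X -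
    have hplus : (2⁻¹ : ℝ) • (f (f X) + f X) ∈ LinearMap.range f :=
      ⟨(2⁻¹ : ℝ) • (f X + X), by rw [LinearMap.map_smul, LinearMap.map_add]⟩
    have hminus : (2⁻¹ : ℝ) • (f (f X) - f X) ∈ LinearMap.range f :=
      ⟨(2⁻¹ : ℝ) • (f X - X), by rw [LinearMap.map_smul, LinearMap.map_sub]⟩
    have hRrange : ∀ μ : Fin (n+1), ∀ hμ0 : μ ≠ 0,
        (⟨MR ν μ, MR_mem hν hμ0⟩ : poincareLie n) ∈ LinearMap.range f := by
      intro μ hμ0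
      refine ⟨⟨MB μ, MB_mem hμ0⟩, ?_⟩
      apply Subtype.ext
      rw [hfval]
      show ⁅MB ν, MB μ⁆ = MR ν μ
      rw [MB, MB, MR, brkB, brk_bm_bm hν hμ0]
      simp
    have hTν : (⟨MT ν, MT_mem ν⟩ : poincareLie n) ∈ LinearMap.range f := by
      refine ⟨⟨MT 0, MT_mem 0⟩, ?_⟩
      apply Subtype.ext
      rw [hfval]
      show ⁅MB ν, MT 0⁆ = MT ν
      rw [MB, MT, MT, brkB, bm_mul_e0 hν]
      simp
    have hRspan : ∀ l μ : Fin (n+1), ∀ hl0 : l ≠ 0, l ≠ ν → ∀ hμ0 : μ ≠ 0, μ ≠ ν →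
        (⟨MR l μ, MR_mem hl0 hμ0⟩ : poincareLie n) ∈
          bracketSpan (LinearMap.range f) (LinearMap.range f) := by
      intro l μ hl0 hlν hμ0 hμν
      apply Submodule.subset_span
      refine ⟨_, hRrange μ hμ0, _, hRrange l hl0, ?_⟩
      apply Subtype.ext
      rw [LieSubalgebra.coe_bracket]
      show MR l μ = ⁅MR ν μ, MR ν l⁆
      rw [MR, MR, MR, brkB, brk_rot_rot hν hl0 hlν hμ0 hμν]
      simp
    have hTspan : ∀ μ : Fin (n+1), μ ≠ 0 → μ ≠ ν →
        (⟨MT μ, MT_mem μ⟩ : poincareLie n) ∈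
          bracketSpan (LinearMap.range f) (LinearMap.range f) := by
      intro μ hμ0 hμν
      have hneg : -(⟨MT μ, MT_mem μ⟩ : poincareLie n) ∈
          bracketSpan (LinearMap.range f) (LinearMap.range f) := by
        apply Submodule.subset_span
        refine ⟨_, hRrange μ hμ0, _, hTν, ?_⟩
        apply Subtype.ext
        rw [LieSubalgebra.coe_bracket]
        show -(MT μ) = ⁅MR ν μ, MT ν⁆
        rw [MR, MT, MT, brkB, rot_mul_eν hμν]
        simp [fromBlocks_neg]
      have := neg_mem hneg
      rwa [neg_neg] at this
    obtain ⟨A, hA, b, hX⟩ := X.2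
    have hA' : Aᵀ * diagonal (minkDiag n) + diagonal (minkDiag n) * A = 0 := hA
    have hffX : ((f (f X) : poincareLie n) : Matrix (Fin (n+1) ⊕ Unit) (Fin (n+1) ⊕ Unit) ℝ)
        = fromBlocks ⁅bm ν, ⁅bm ν, A⁆⁆ (bm ν * (bm ν * b)) 0 0 := by
      simp only [hfval]
      rw [hX, MB, brkB, brkB]
      simp only [Matrix.mul_zero, sub_zero]
    have hcoe1 : ∀ l μ : Fin (n+1),
        (((if h : l = 0 ∨ l = ν ∨ μ = 0 ∨ μ = ν then (0 : poincareLie n)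
            else (A l μ / 2) • ⟨MR l μ,
              MR_mem (by push_neg at h; exact h.1) (by push_neg at h; exact h.2.2.1)⟩) :
            poincareLie n) : Matrix _ _ ℝ)
        = (if l = 0 ∨ l = ν ∨ μ = 0 ∨ μ = ν then 0 else A l μ / 2) • MR l μ := by
      intro l μ
      split_ifs
      · simp
      · rfl
    have hcoe2 : ∀ μ : Fin (n+1),
        (((if μ = 0 ∨ μ = ν then (0 : poincareLie n)
            else (b μ ()) • ⟨MT μ, MT_mem μ⟩) : poincareLie n) : Matrix _ _ ℝ)
        = (if μ = 0 ∨ μ = ν then 0 else b μ ()) • MT μ := by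
      intro μ
      split_ifs
      · simp
      · rfl
    have hX0 : X - f (f X) = (A 0 ν) • Mel
        + (∑ l : Fin (n+1), ∑ μ : Fin (n+1),
            if h : l = 0 ∨ l = ν ∨ μ = 0 ∨ μ = ν then (0 : poincareLie n)
            else (A l μ / 2) • ⟨MR l μ,
              MR_mem (by push_neg at h; exact h.1) (by push_neg at h; exact h.2.2.1)⟩)
        + (∑ μ : Fin (n+1), if μ = 0 ∨ μ = ν then (0 : poincareLie n)
            else (b μ ()) • ⟨MT μ, MT_mem μ⟩) := by
      apply Subtype.ext
      push_cast [coe_smulP, hcoe1, hcoe2]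
      rw [hX, hffX, hM]
      simp only [MB, MR, MT, fromBlocks_smul, smul_zero, sum_fromBlocks,
        Finset.sum_const_zero]
      rw [fromBlocks_sub', A0_decomp hν hA', b0_decomp hν b]
      simp only [fromBlocks_add, add_zero, zero_add]
    rw [show X = (X - f (f X)) + ((2⁻¹ : ℝ) • (f (f X) + f X)
        + (2⁻¹ : ℝ) • (f (f X) - f X)) by module]
    refine add_mem ?_ (add_mem (Submodule.mem_sup_left (Submodule.mem_sup_right hplus))
      (Submodule.mem_sup_left (Submodule.mem_sup_right hminus)))
    rw [hX0]
    refine add_mem (add_mem ?_ ?_) ?_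
    · exact Submodule.mem_sup_left (Submodule.mem_sup_left
        (Submodule.smul_mem _ _ (Submodule.mem_span_singleton_self _)))
    · refine Submodule.sum_mem _ fun l _ => Submodule.sum_mem _ fun μ _ => ?_
      split_ifs with h
      · exact zero_mem _
      · push_neg at h
        exact Submodule.mem_sup_right
          (Submodule.smul_mem _ _ (hRspan l μ h.1 h.2.1 h.2.2.1 h.2.2.2))
    · refine Submodule.sum_mem _ fun μ _ => ?_
      split_ifs with h
      · exact zero_mem _
      · push_neg at h
        exact Submodule.mem_sup_right
          (Submodule.smul_mem _ _ (hTspan μ h.1 h.2))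

end PoincareAux

/-- In the Poincaré algebra `iso(1,n)`, each embedded boost generator
`[[m_{0ν}, 0], [0, 0]]` with `m_{0ν} = E(0,ν) + E(ν,0)`, `1 ≤ ν ≤ n`, is essential. -/
theorem poincare_boost_essential (n : ℕ) (hn : 1 ≤ n) (ν : Fin (n + 1)) (hν : ν ≠ 0) :
    Essential
      (⟨fromBlocks
          (single (0 : Fin (n + 1)) ν (1 : ℝ) + single ν (0 : Fin (n + 1)) 1)
          0 0 0,
        ⟨single (0 : Fin (n + 1)) ν (1 : ℝ) + single ν (0 : Fin (n + 1)) 1,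
          boost_mem_lieSO (minkDiag n) 0 ν (by simp [minkDiag]) (by simp [minkDiag, hν]),
          0, rfl⟩⟩ : poincareLie n) :=
  PoincareAux.essential_of hν _ rfl
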